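/- Let p_1,...,p_n and q_1,...,q_n be points in ℝ^m. If ‖p_i - p_j‖ = ‖q_i - q_j‖ for all i, j = 1,...,n, then there exists an orthogonal m×m matrix M and a vector T ∈ ℝ^m such that M p_i + T = q_i for every i = 1,...,n. -/

import Mathlib

open scoped RealInnerProductSpace

noncomputable section

namespace Stmt0Aux

variable {m : ℕ}

/-- linear combination map -/
def combo {n : ℕ} (v : Fin n → EuclideanSpace ℝ (Fin m)) :
    (Fin n → ℝ) →ₗ[ℝ] EuclideanSpace ℝ (Fin m) where
  toFun c := ∑ i, c i • v i
  map_add' c d := by simp [add_smul, Finset.sum_add_distrib]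
  map_smul' r c := by simp [mul_smul, Finset.smul_sum]

lemma combo_single {n : ℕ} (v : Fin n → EuclideanSpace ℝ (Fin m)) (i : Fin n) :
    combo v (Pi.single i 1) = v i := by
  simp [combo, Pi.single_apply, ite_smul]

lemma inner_combo {n : ℕ} (v w : Fin n → EuclideanSpace ℝ (Fin m)) (c d : Fin n → ℝ) :
    ⟪combo v c, combo w d⟫ = ∑ i, ∑ j, c i * d j * ⟪v i, w j⟫ := by
  simp only [combo, LinearMap.coe_mk, AddHom.coe_mk]
  rw [sum_inner]
  refine Finset.sum_congr rfl fun i _ => ?_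
  rw [inner_sum]
  refine Finset.sum_congr rfl fun j _ => ?_
  rw [real_inner_smul_left, real_inner_smul_right]; ring

end Stmt0Aux

end

theorem stmt_0 (m n : ℕ) (p q : Fin n → EuclideanSpace ℝ (Fin m))
    (h : ∀ i j, dist (p i) (p j) = dist (q i) (q j)) :
    ∃ M : Matrix (Fin m) (Fin m) ℝ, M ∈ Matrix.orthogonalGroup (Fin m) ℝ ∧
      ∃ T : EuclideanSpace ℝ (Fin m),
        ∀ i, (WithLp.equiv 2 (Fin m → ℝ)).symm (M.mulVec (p i)) + T = q i := by
  classical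
  rcases Nat.eq_zero_or_pos n with hn | hn
  · subst hn
    exact ⟨1, one_mem _, 0, fun i => i.elim0⟩
  let z : Fin n := ⟨0, hn⟩
  set p' : Fin n → EuclideanSpace ℝ (Fin m) := fun i => p i - p z with hp'
  set q' : Fin n → EuclideanSpace ℝ (Fin m) := fun i => q i - q z with hq'
  -- distances between differences
  have hnorm : ∀ i j, ‖p i - p j‖ = ‖q i - q j‖ := by
    intro i j; rw [← dist_eq_norm, ← dist_eq_norm]; exact h i j
  have hinner : ∀ i j, ⟪p' i, p' j⟫ = ⟪q' i, q' j⟫ := by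
    intro i j
    have h1 : ‖p' i‖ = ‖q' i‖ := hnorm i z
    have h2 : ‖p' j‖ = ‖q' j‖ := hnorm j z
    have h3 : ‖p' i - p' j‖ = ‖q' i - q' j‖ := by
      have : p' i - p' j = p i - p j := by simp [hp']
      have h' : q' i - q' j = q i - q j := by simp [hq']
      rw [this, h', hnorm]
    have e1 := @norm_sub_sq_real (EuclideanSpace ℝ (Fin m)) _ _ (p' i) (p' j)
    have e2 := @norm_sub_sq_real (EuclideanSpace ℝ (Fin m)) _ _ (q' i) (q' j)
    rw [h1, h2, h3] at e1
    nlinarith [e1, e2]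
  set A := Stmt0Aux.combo p' with hA
  set B := Stmt0Aux.combo q' with hB
  have hnormAB : ∀ c, ‖A c‖ = ‖B c‖ := by
    intro c
    have h1 : ⟪A c, A c⟫ = ⟪B c, B c⟫ := by
      rw [hA, hB, Stmt0Aux.inner_combo, Stmt0Aux.inner_combo]
      exact Finset.sum_congr rfl fun i _ => Finset.sum_congr rfl fun j _ => by rw [hinner]
    have h2 := @real_inner_self_eq_norm_sq (EuclideanSpace ℝ (Fin m)) _ _ (A c)
    have h3 := @real_inner_self_eq_norm_sq (EuclideanSpace ℝ (Fin m)) _ _ (B c)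
    nlinarith [norm_nonneg (A c), norm_nonneg (B c)]
  have hker : LinearMap.ker A ≤ LinearMap.ker B := by
    intro c hc
    rw [LinearMap.mem_ker] at hc ⊢
    have := hnormAB c
    rw [hc, norm_zero] at this
    exact norm_eq_zero.mp this.symm
  -- the isometry on the range of A
  set g : LinearMap.range A →ₗ[ℝ] EuclideanSpace ℝ (Fin m) :=
    ((LinearMap.ker A).liftQ B hker).comp A.quotKerEquivRange.symm.toLinearMap with hg
  have hgA : ∀ c (hc : A c ∈ LinearMap.range A), g ⟨A c, hc⟩ = B c := by
    intro c hc
    rw [hg]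
    simp only [LinearMap.coe_comp, Function.comp_apply, LinearEquiv.coe_coe]
    rw [LinearMap.quotKerEquivRange_symm_apply_image]
    simp [Submodule.liftQ_apply]
  have hgnorm : ∀ x : LinearMap.range A, ‖g x‖ = ‖x‖ := by
    rintro ⟨x, hx⟩
    obtain ⟨c, rfl⟩ := hx
    rw [hgA c (LinearMap.mem_range_self A c)]
    exact (hnormAB c).symm
  set gi : LinearMap.range A →ₗᵢ[ℝ] EuclideanSpace ℝ (Fin m) := ⟨g, hgnorm⟩ with hgi
  set L := gi.extend with hL
  have hLp' : ∀ i, L (p' i) = q' i := by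
    intro i
    have hmem : p' i ∈ LinearMap.range A := by
      refine ⟨Pi.single i 1, ?_⟩
      rw [hA]; exact Stmt0Aux.combo_single p' i
    have := gi.extend_apply ⟨p' i, hmem⟩
    rw [hL]
    have h2 : gi ⟨p' i, hmem⟩ = q' i := by
      rw [hgi]
      show g ⟨p' i, hmem⟩ = q' i
      have hc : A (Pi.single i 1) ∈ LinearMap.range A := LinearMap.mem_range_self _ _
      have he : p' i = A (Pi.single i 1) := (Stmt0Aux.combo_single p' i).symm
      have : (⟨p' i, hmem⟩ : LinearMap.range A) = ⟨A (Pi.single i 1), hc⟩ := by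
        simp [he]
      rw [this, hgA]
      rw [hB]; exact Stmt0Aux.combo_single q' i
    rw [← h2]
    exact this
  -- matrix of L
  set e : Fin m → EuclideanSpace ℝ (Fin m) := fun j => EuclideanSpace.single j 1 with he
  set M : Matrix (Fin m) (Fin m) ℝ := fun a j => L (e j) a with hM
  have hmul : ∀ x : EuclideanSpace ℝ (Fin m), (WithLp.equiv 2 (Fin m → ℝ)).symm (M.mulVec x) = L x := by
    intro x
    have hx : x = ∑ j, x j • e j := by
      conv_lhs => rw [← (EuclideanSpace.basisFun (Fin m) ℝ).sum_repr x]
      simp [he, EuclideanSpace.basisFun_repr, EuclideanSpace.basisFun_apply]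
    ext a
    show (M.mulVec x) a = L x a
    conv_rhs => rw [hx]
    rw [map_sum]
    simp only [Matrix.mulVec, dotProduct, hM]
    rw [WithLp.ofLp_sum, Finset.sum_apply]
    exact Finset.sum_congr rfl fun j _ => by simp [mul_comm]
  have hMorth : M ∈ Matrix.orthogonalGroup (Fin m) ℝ := by
    rw [Matrix.mem_orthogonalGroup_iff']
    ext j k
    rw [Matrix.mul_apply]
    simp only [Matrix.star_apply, Matrix.transpose_apply, Matrix.one_apply, star_trivial]
    simp only [hM]
    have := L.inner_map_map (e j) (e k)
    rw [PiLp.inner_apply, PiLp.inner_apply] at this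
    simp only [RCLike.inner_apply, starRingEnd_apply, star_trivial] at this
    rw [Finset.sum_congr rfl fun x _ => mul_comm _ _, this]
    simp [he, EuclideanSpace.single_apply, Finset.sum_ite_eq', eq_comm]
  refine ⟨M, hMorth, q z - L (p z), fun i => ?_⟩
  rw [hmul]
  have : L (p i) = L (p' i) + L (p z) := by
    rw [← map_add]; congr 1; simp [hp']
  rw [this, hLp']
  simp [hq']
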